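/- Let G be a group with a subgroup H, and suppose α ∈ (x-1)·kH ∩ (y-1)·kH = 0 for all α, where x, y ∈ H. Then also (x-1)·kG ∩ (y-1)·kG = 0, where kG is the group ring of G over a field k. -/

import Mathlib

/-- Let `k` be a field, `G` a group with subgroup `H`, and `x, y ∈ H`.  If the
right ideals `(x-1)kH` and `(y-1)kH` of `kH` intersect trivially, then the right ideals
`(x-1)kG` and `(y-1)kG` of `kG` intersect trivially. -/
theorem stmt_18 (k : Type*) [Field k] (G : Type*) [Group G] (H : Subgroup G) (x y : H)
    (hH : ∀ α : MonoidAlgebra k H,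
      (∃ β, α = (MonoidAlgebra.of k H x - 1) * β) →
      (∃ γ, α = (MonoidAlgebra.of k H y - 1) * γ) → α = 0) :
    ∀ α : MonoidAlgebra k G,
      (∃ β, α = (MonoidAlgebra.of k G (x : G) - 1) * β) →
      (∃ γ, α = (MonoidAlgebra.of k G (y : G) - 1) * γ) → α = 0 := by
  rintro α ⟨β, hβ⟩ ⟨γ, hγ⟩
  ext g
  have hinj : Function.Injective (fun h : H => (h : G) * g) := by
    intro a b hab
    exact Subtype.ext (mul_left_injective g hab)
  let Φ : MonoidAlgebra k G → MonoidAlgebra k H := fun f =>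
    MonoidAlgebra.ofCoeff (Finsupp.comapDomain (fun h : H => (h : G) * g) f.coeff hinj.injOn)
  have key : ∀ (z : H) (f : MonoidAlgebra k G),
      Φ ((MonoidAlgebra.of k G (z : G) - 1) * f) = (MonoidAlgebra.of k H z - 1) * Φ f := by
    intro z f
    ext h
    show ((MonoidAlgebra.of k G (z : G) - 1) * f).coeff ((h : G) * g) = _
    rw [sub_mul, sub_mul, one_mul, one_mul, MonoidAlgebra.coeff_sub, MonoidAlgebra.coeff_sub, Finsupp.sub_apply, Finsupp.sub_apply]
    simp [Φ, Finsupp.comapDomain_apply, MonoidAlgebra.of_apply,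
      MonoidAlgebra.single_mul_apply, mul_assoc]
  have h1 : Φ α = (MonoidAlgebra.of k H x - 1) * Φ β := by rw [hβ]; exact key x β
  have h2 : Φ α = (MonoidAlgebra.of k H y - 1) * Φ γ := by rw [hγ]; exact key y γ
  have h0 := hH (Φ α) ⟨Φ β, h1⟩ ⟨Φ γ, h2⟩
  have := congrArg (fun f : MonoidAlgebra k H => f.coeff (1 : H)) h0
  simpa [Φ, Finsupp.comapDomain_apply] using this
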